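/- Let C̄ and Y be finite nonempty sets, k ≥ 1, and β* : C̄^k → Y a k-unambiguous map, i.e., β*(c, …, c) ≠ β*(c', …, c') for all c ≠ c' in C̄. Let X̄ be a measurable space, μ̄ a probability measure on X̄, ḡ* : X̄ → C̄ measurable, and equip X̄^k with the product measure μ = μ̄^{⊗k}. For a measurable classifier f̄ : X̄ → C̄, define the zero-one concept risk R_C(f̄) = μ̄({x̄ : f̄(x̄) ≠ ḡ*(x̄)}) and the zero-one label risk R_Y(f̄) = μ({(x̄_1,…,x̄_k) : β*(f̄(x̄_1), …, f̄(x̄_k)) ≠ β*(ḡ*(x̄_1), …, ḡ*(x̄_k))}). Then for every measurable f̄, R_C(f̄) ≤ |C̄|² · R_Y(f̄)^{1/k}. In particular R_C(f̄) = O(R_Y(f̄)^{1/k}) as R_Y(f̄) → 0. -/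

import Mathlib

open MeasureTheory
open scoped ENNReal

/-- **Concept risk bound under `k`-unambiguity.** Let `C̄`, `Y` be finite
nonempty sets, `k ≥ 1`, and `β* : C̄^k → Y` `k`-unambiguous
(`β* (c,…,c) ≠ β* (c',…,c')` for all `c ≠ c'`). Let `μ̄` be a probability
measure on `X̄`, `ḡ* : X̄ → C̄` the measurable ground-truth concept, and equip
`X̄^k` with the product measure `μ = μ̄^{⊗k}`. Then for every measurable
classifier `f̄ : X̄ → C̄`, the zero-one concept risk
`R_C(f̄) = μ̄ {x | f̄ x ≠ ḡ* x}` and the zero-one label risk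
`R_Y(f̄) = μ {x | β* (f̄ ∘ x) ≠ β* (ḡ* ∘ x)}` satisfy
`R_C(f̄) ≤ |C̄|² · R_Y(f̄)^{1/k}`. -/
theorem concept_risk_le_label_risk_rpow
    {Cb : Type*} [Fintype Cb] [Nonempty Cb]
    [MeasurableSpace Cb] [MeasurableSingletonClass Cb]
    {Y : Type*} [Fintype Y] [Nonempty Y]
    {k : ℕ} (hk : 1 ≤ k) (β : (Fin k → Cb) → Y)
    (hunamb : ∀ c c' : Cb, c ≠ c' → β (fun _ => c) ≠ β (fun _ => c'))
    {Xb : Type*} [MeasurableSpace Xb]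
    (μb : Measure Xb) [IsProbabilityMeasure μb]
    (g : Xb → Cb) (hg : Measurable g)
    (f : Xb → Cb) (hf : Measurable f) :
    μb {x | f x ≠ g x}
      ≤ (Fintype.card Cb : ℝ≥0∞) ^ 2 *
        ((Measure.pi fun _ : Fin k => μb)
            {x | β (fun j => f (x j)) ≠ β (fun j => g (x j))}) ^ ((1 : ℝ) / k) := by
  classical
  set RY := (Measure.pi fun _ : Fin k => μb)
      {x | β (fun j => f (x j)) ≠ β (fun j => g (x j))} with hRY
  set S : Cb × Cb → Set Xb :=
    fun p => if p.1 ≠ p.2 then {x | g x = p.1 ∧ f x = p.2} else ∅ with hS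
  have hcover : {x | f x ≠ g x} ⊆ ⋃ p : Cb × Cb, S p := by
    intro x hx
    refine Set.mem_iUnion.2 ⟨(g x, f x), ?_⟩
    simp only [hS, if_pos (Ne.symm hx)]
    exact ⟨rfl, rfl⟩
  obtain ⟨p0, -, hp0⟩ := Finset.exists_max_image (Finset.univ : Finset (Cb × Cb))
    (fun p => μb (S p)) ⟨(Classical.arbitrary Cb, Classical.arbitrary Cb), Finset.mem_univ _⟩
  have hcard : μb {x | f x ≠ g x} ≤ (Fintype.card Cb : ℝ≥0∞) ^ 2 * μb (S p0) := by
    calc μb {x | f x ≠ g x} ≤ μb (⋃ p : Cb × Cb, S p) := measure_mono hcover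
      _ ≤ ∑' p : Cb × Cb, μb (S p) := measure_iUnion_le S
      _ = ∑ p : Cb × Cb, μb (S p) := tsum_fintype _
      _ ≤ ∑ _p : Cb × Cb, μb (S p0) :=
          Finset.sum_le_sum fun p _ => hp0 p (Finset.mem_univ p)
      _ = (Fintype.card (Cb × Cb) : ℝ≥0∞) * μb (S p0) := by
          simp [Finset.sum_const, nsmul_eq_mul]
      _ = (Fintype.card Cb : ℝ≥0∞) ^ 2 * μb (S p0) := by
          rw [Fintype.card_prod]; push_cast; ring
  by_cases hpe : p0.1 = p0.2
  · have : S p0 = ∅ := by simp [hS, hpe]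
    have h0 : μb {x | f x ≠ g x} ≤ 0 := by simpa [this] using hcard
    exact le_trans h0 zero_le
  · have hSp0 : S p0 = {x | g x = p0.1 ∧ f x = p0.2} := by simp [hS, hpe]
    -- all-coordinates-in-error-set event
    have hsub : Set.pi Set.univ (fun _ : Fin k => S p0) ⊆
        {x : Fin k → Xb | β (fun j => f (x j)) ≠ β (fun j => g (x j))} := by
      intro x hx
      have hxj : ∀ j, g (x j) = p0.1 ∧ f (x j) = p0.2 := by
        intro j
        have := hx j (Set.mem_univ j)
        rwa [hSp0] at this
      have hfx : (fun j => f (x j)) = fun _ => p0.2 := funext fun j => (hxj j).2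
      have hgx : (fun j => g (x j)) = fun _ => p0.1 := funext fun j => (hxj j).1
      simp only [Set.mem_setOf_eq, hfx, hgx]
      exact (hunamb p0.1 p0.2 hpe).symm
    have hpow : μb (S p0) ^ k ≤ RY := by
      have := measure_mono (μ := Measure.pi fun _ : Fin k => μb) hsub
      rwa [Measure.pi_pi, Finset.prod_const, Finset.card_univ, Fintype.card_fin] at this
    have hk0 : (k : ℝ) ≠ 0 := Nat.cast_ne_zero.2 (by omega)
    have hroot : μb (S p0) ≤ RY ^ ((1 : ℝ) / k) := by
      calc μb (S p0) = (μb (S p0) ^ k) ^ ((1 : ℝ) / k) := by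
            rw [← ENNReal.rpow_natCast (μb (S p0)) k, ← ENNReal.rpow_mul,
              mul_one_div, div_self hk0, ENNReal.rpow_one]
        _ ≤ RY ^ ((1 : ℝ) / k) :=
            ENNReal.rpow_le_rpow hpow (by positivity)
    exact hcard.trans (mul_le_mul_right hroot _)
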